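/- If M,w ⊨ ⟨α₁⟩…⟨α_k⟩ψ for a PDL model M with k > 0, then there exists a witness chain for (⟨α₁⟩…⟨α_k⟩ψ, ψ, M, w): a finite sequence (w_0,ψ_0),…,(w_n,ψ_n) with n > 0 such that each ψ_i is in Pre(ψ) (i.e. of the form ⟨β₁⟩…⟨β_m⟩ψ), M,w_i ⊨ ψ_i for all i, w_0 = w, ψ_0 = ⟨α₁⟩…⟨α_k⟩ψ, ψ_n = ψ, ψ_i ≠ ψ for i < n, no pair repeats, and each step either follows an atomic-program transition (ψ_i = ⟨a⟩χ, ψ_{i+1} = χ, w_i R_a w_{i+1}) or is a single ⇝-reduction step at the same world. -/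

import Mathlib

mutual
  inductive Fml : Type
    | atom : ℕ → Fml
    | neg  : Fml → Fml
    | and  : Fml → Fml → Fml
    | or   : Fml → Fml → Fml
    | dia  : Prg → Fml → Fml
    | box  : Prg → Fml → Fml
  inductive Prg : Type
    | atom  : ℕ → Prg
    | seq   : Prg → Prg → Prg
    | union : Prg → Prg → Prg
    | star  : Prg → Prg
    | test  : Fml → Prg
end

/-- A PDL model: worlds, relations for atomic programs, valuation. -/
structure Model where
  W : Type
  R : ℕ → W → W → Prop
  V : ℕ → W → Prop

mutual
  /-- Truth of a formula at a world. -/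
  def Model.sat (M : Model) : M.W → Fml → Prop
    | w, .atom p  => M.V p w
    | w, .neg φ   => ¬ M.sat w φ
    | w, .and φ ψ => M.sat w φ ∧ M.sat w ψ
    | w, .or φ ψ  => M.sat w φ ∨ M.sat w ψ
    | w, .dia α φ => ∃ v, M.rel α w v ∧ M.sat v φ
    | w, .box α φ => ∀ v, M.rel α w v → M.sat v φ
  /-- Interpretation of programs as binary relations. -/
  def Model.rel (M : Model) : Prg → M.W → M.W → Prop
    | .atom a, w, v    => M.R a w v
    | .seq α β, w, v   => ∃ u, M.rel α w u ∧ M.rel β u v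
    | .union α β, w, v => M.rel α w v ∨ M.rel β w v
    | .star α, w, v    => Relation.ReflTransGen (fun x y => M.rel α x y) w v
    | .test φ, w, v    => w = v ∧ M.sat w φ
end

/-- The reduction relation ⇝ on diamond formulae. -/
inductive Red : Fml → Fml → Prop
  | seq (α β : Prg) (χ : Fml) : Red (.dia (.seq α β) χ) (.dia α (.dia β χ))
  | unionL (α β : Prg) (χ : Fml) : Red (.dia (.union α β) χ) (.dia α χ)
  | unionR (α β : Prg) (χ : Fml) : Red (.dia (.union α β) χ) (.dia β χ)
  | star1 (α : Prg) (χ : Fml) : Red (.dia (.star α) χ) χ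
  | star2 (α : Prg) (χ : Fml) : Red (.dia (.star α) χ) (.dia α (.dia (.star α) χ))
  | test (ψ χ : Fml) : Red (.dia (.test ψ) χ) χ

/-- Pre φ : formulae of the form ⟨β₁⟩…⟨β_m⟩φ with m ≥ 0. -/
inductive Pre (φ : Fml) : Fml → Prop
  | base : Pre φ φ
  | dia (α : Prg) {ψ : Fml} : Pre φ ψ → Pre φ (.dia α ψ)

/-- ⟨α₁⟩…⟨α_k⟩ψ for a list of programs. -/
def dias : List Prg → Fml → Fml
  | [], φ => φ
  | α :: L, φ => .dia α (dias L φ)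

/-- A witness chain for (φ, ψ, M, w), with data (n, ws, ψs). -/
def IsWitnessChain (M : Model) (φ ψ : Fml) (w : M.W)
    (n : ℕ) (ws : ℕ → M.W) (ψs : ℕ → Fml) : Prop :=
  0 < n ∧
  (∀ i ≤ n, Pre ψ (ψs i) ∧ M.sat (ws i) (ψs i)) ∧
  ws 0 = w ∧ ψs 0 = φ ∧ ψs n = ψ ∧ (∀ i < n, ψs i ≠ ψ) ∧
  (∀ i ≤ n, ∀ j ≤ n, i ≠ j → (ws i, ψs i) ≠ (ws j, ψs j)) ∧
  (∀ i < n,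
    (∀ (a : ℕ) (χ : Fml), ψs i = Fml.dia (.atom a) χ →
        ψs (i+1) = χ ∧ M.R a (ws i) (ws (i+1))) ∧
    ((∀ (a : ℕ) (χ : Fml), ψs i ≠ Fml.dia (.atom a) χ) →
        Red (ψs i) (ψs (i+1)) ∧ ws i = ws (i+1)))

lemma sat_dia {M : Model} {w : M.W} {α : Prg} {φ : Fml} :
    M.sat w (.dia α φ) ↔ ∃ v, M.rel α w v ∧ M.sat v φ := by
  simp only [Model.sat]

lemma rel_seq {M : Model} {w v : M.W} {α β : Prg} :
    M.rel (.seq α β) w v ↔ ∃ u, M.rel α w u ∧ M.rel β u v := by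
  simp only [Model.rel]

lemma rel_union {M : Model} {w v : M.W} {α β : Prg} :
    M.rel (.union α β) w v ↔ M.rel α w v ∨ M.rel β w v := by
  simp only [Model.rel]

lemma rel_star {M : Model} {w v : M.W} {α : Prg} :
    M.rel (.star α) w v ↔ Relation.ReflTransGen (fun x y => M.rel α x y) w v := by
  simp only [Model.rel]

lemma rel_test {M : Model} {w v : M.W} {χ : Fml} :
    M.rel (.test χ) w v ↔ w = v ∧ M.sat w χ := by
  simp only [Model.rel]

lemma rel_atom {M : Model} {w v : M.W} {a : ℕ} :
    M.rel (.atom a) w v ↔ M.R a w v := by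
  simp only [Model.rel]

section Aux

variable (M : Model) (ψ : Fml)

/-- One step of a witness chain: either an atomic transition or a reduction. -/
def WStep (p q : M.W × Fml) : Prop :=
  (∃ a χ, p.2 = Fml.dia (.atom a) χ ∧ q.2 = χ ∧ M.R a p.1 q.1) ∨
  ((∀ a χ, p.2 ≠ Fml.dia (.atom a) χ) ∧ Red p.2 q.2 ∧ p.1 = q.1)

/-- Invariant of chain nodes. -/
def WInv (p : M.W × Fml) : Prop := M.sat p.1 p.2 ∧ Pre ψ p.2

/-- WStep together with the invariant at the target. -/
def WStepI (p q : M.W × Fml) : Prop := WStep M p q ∧ WInv M ψ q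

lemma reach (α : Prg) (φ : Fml) (w v : M.W) (hr : M.rel α w v) (hs : M.sat v φ)
    (hp : Pre ψ φ) :
    Relation.ReflTransGen (WStepI M ψ) (w, Fml.dia α φ) (v, φ) := by
  match α with
  | .atom a =>
    exact Relation.ReflTransGen.single ⟨Or.inl ⟨a, φ, rfl, rfl, rel_atom.mp hr⟩, hs, hp⟩
  | .seq α β =>
    obtain ⟨u, hwu, huv⟩ : ∃ u, M.rel α w u ∧ M.rel β u v := rel_seq.mp hr
    have h1 : WStepI M ψ (w, Fml.dia (.seq α β) φ) (w, Fml.dia α (Fml.dia β φ)) := by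
      refine ⟨Or.inr ⟨(by intro a χ h; cases h), Red.seq α β φ, rfl⟩, ?_, Pre.dia α (Pre.dia β hp)⟩
      exact sat_dia.mpr ⟨u, hwu, sat_dia.mpr ⟨v, huv, hs⟩⟩
    exact (Relation.ReflTransGen.single h1).trans
      ((reach α (Fml.dia β φ) w u hwu (sat_dia.mpr ⟨v, huv, hs⟩) (Pre.dia β hp)).trans
        (reach β φ u v huv hs hp))
  | .union α β =>
    rcases rel_union.mp hr with hr | hr
    · have h1 : WStepI M ψ (w, Fml.dia (.union α β) φ) (w, Fml.dia α φ) :=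
        ⟨Or.inr ⟨(by intro a χ h; cases h), Red.unionL α β φ, rfl⟩, sat_dia.mpr ⟨v, hr, hs⟩, Pre.dia α hp⟩
      exact (Relation.ReflTransGen.single h1).trans (reach α φ w v hr hs hp)
    · have h1 : WStepI M ψ (w, Fml.dia (.union α β) φ) (w, Fml.dia β φ) :=
        ⟨Or.inr ⟨(by intro a χ h; cases h), Red.unionR α β φ, rfl⟩, sat_dia.mpr ⟨v, hr, hs⟩, Pre.dia β hp⟩
      exact (Relation.ReflTransGen.single h1).trans (reach β φ w v hr hs hp)
  | .star α =>
    have hr' : Relation.ReflTransGen (fun x y => M.rel α x y) w v := rel_star.mp hr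
    clear hr
    induction hr' using Relation.ReflTransGen.head_induction_on with
    | refl =>
      exact Relation.ReflTransGen.single
        ⟨Or.inr ⟨(by intro a χ h; cases h), Red.star1 α φ, rfl⟩, hs, hp⟩
    | @head w u hwu huv ih =>
      have hsu : M.sat u (Fml.dia (.star α) φ) := sat_dia.mpr ⟨v, rel_star.mpr huv, hs⟩
      have h1 : WStepI M ψ (w, Fml.dia (.star α) φ) (w, Fml.dia α (Fml.dia (.star α) φ)) :=
        ⟨Or.inr ⟨(by intro a χ h; cases h), Red.star2 α φ, rfl⟩, sat_dia.mpr ⟨u, hwu, hsu⟩,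
          Pre.dia α (Pre.dia _ hp)⟩
      exact (Relation.ReflTransGen.single h1).trans
        ((reach α (Fml.dia (.star α) φ) w u hwu hsu (Pre.dia _ hp)).trans ih)
  | .test χ =>
    obtain ⟨rfl, _⟩ : w = v ∧ M.sat w χ := rel_test.mp hr
    exact Relation.ReflTransGen.single
      ⟨Or.inr ⟨(by intro a χ' h; cases h), Red.test χ φ, rfl⟩, hs, hp⟩
termination_by sizeOf α
decreasing_by all_goals (simp_wf; try omega)

lemma pre_dias : ∀ L : List Prg, Pre ψ (dias L ψ)
  | [] => Pre.base
  | α :: L => Pre.dia α (pre_dias L)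

lemma reachL : ∀ (L : List Prg) (w : M.W), M.sat w (dias L ψ) →
    ∃ v, Relation.ReflTransGen (WStepI M ψ) (w, dias L ψ) (v, ψ) := by
  intro L
  induction L with
  | nil => intro w _; exact ⟨w, Relation.ReflTransGen.refl⟩
  | cons α L ih =>
    intro w hs
    obtain ⟨u, hwu, hu⟩ : ∃ u, M.rel α w u ∧ M.sat u (dias L ψ) := sat_dia.mp hs
    obtain ⟨v, hv⟩ := ih u hu
    exact ⟨v, (reach M ψ α (dias L ψ) w u hwu hu (pre_dias ψ L)).trans hv⟩

end Aux

lemma sizeOf_dias (ψ : Fml) : ∀ L : List Prg, sizeOf ψ ≤ sizeOf (dias L ψ) := by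
  intro L
  induction L with
  | nil => simp [dias]
  | cons α L ih => simp only [dias, Fml.dia.sizeOf_spec]; omega

lemma dias_ne (ψ : Fml) (α : Prg) (L : List Prg) : dias (α :: L) ψ ≠ ψ := by
  intro h
  have := sizeOf_dias ψ L
  have h2 : sizeOf (dias (α :: L) ψ) = sizeOf ψ := by rw [h]
  simp only [dias, Fml.dia.sizeOf_spec] at h2
  omega

section Prune
variable {P : Type} {r : P → P → Prop} (p : P → Prop)

lemma chain_truncate : ∀ (l : List P) (a : P), List.Chain r a l → (∃ x ∈ l, p x) → ¬ p a →
    ∃ l₁, l₁ ≠ [] ∧ List.Chain r a l₁ ∧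
      p ((a :: l₁).getLast (List.cons_ne_nil _ _)) ∧
      (∀ x ∈ (a :: l₁).dropLast, ¬ p x) ∧ (∀ x ∈ l₁, x ∈ l) := by
  intro l
  induction l with
  | nil => intro a _ hx _; simp at hx
  | cons c t ih =>
    intro a hc hx hpa
    rw [List.Chain, List.chain_cons] at hc
    by_cases hpc : p c
    · exact ⟨[c], by simp, List.chain_cons.mpr ⟨hc.1, List.Chain.nil⟩, hpc,
        by simpa using hpa, by simp⟩
    · have hx' : ∃ x ∈ t, p x := by
        obtain ⟨x, hx1, hx2⟩ := hx
        rcases List.mem_cons.mp hx1 with rfl | h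
        · exact absurd hx2 hpc
        · exact ⟨x, h, hx2⟩
      obtain ⟨l₁, h1, h2, h3, h4, h5⟩ := ih c hc.2 hx' hpc
      refine ⟨c :: l₁, by simp, List.chain_cons.mpr ⟨hc.1, h2⟩, ?_, ?_, ?_⟩
      · rwa [List.getLast_cons (List.cons_ne_nil _ _)]
      · intro x hxm
        rw [List.dropLast_cons₂] at hxm
        rcases List.mem_cons.mp hxm with rfl | h
        · exact hpa
        · exact h4 x h
      · intro x hxm
        rcases List.mem_cons.mp hxm with rfl | h
        · exact List.mem_cons_self
        · exact List.mem_cons_of_mem _ (h5 x h)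

lemma chain_dedup_aux : ∀ (n : ℕ) (l : List P), l.length ≤ n → ∀ (a b : P), List.Chain r a l →
    (a :: l).getLast (List.cons_ne_nil _ _) = b →
    ∃ l', List.Chain r a l' ∧ (a :: l').getLast (List.cons_ne_nil _ _) = b ∧
      (a :: l').Nodup ∧ ∀ x ∈ l', x ∈ l := by
  intro n
  induction n with
  | zero =>
    intro l hn a b hc hb
    have : l = [] := List.length_eq_zero_iff.mp (Nat.le_zero.mp hn)
    subst this
    exact ⟨[], List.Chain.nil, hb, by simp, by simp⟩
  | succ n ih =>
    intro l hn a b hc hb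
    classical
    by_cases h : a ∈ l
    · obtain ⟨l₁, l₂, rfl⟩ := List.append_of_mem h
      have hc2 : List.Chain r a l₂ := (List.isChain_cons_split.mp hc).2
      have hb2 : (a :: l₂).getLast (List.cons_ne_nil _ _) = b := by
        rw [← hb]
        rw [show ((a :: (l₁ ++ a :: l₂)).getLast (List.cons_ne_nil _ _)) =
          (((a :: l₁) ++ (a :: l₂)).getLast (by simp)) from by congr 1]
        rw [List.getLast_append_of_ne_nil (List.cons_ne_nil _ _)]
      have hlen : l₂.length ≤ n := by
        have := hn; simp only [List.length_append, List.length_cons] at this; omega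
      obtain ⟨l', h1, h2, h3, h4⟩ := ih l₂ hlen a b hc2 hb2
      exact ⟨l', h1, h2, h3, fun x hx => by
        simp only [List.mem_append, List.mem_cons]; exact Or.inr (Or.inr (h4 x hx))⟩
    · cases l with
      | nil => exact ⟨[], List.Chain.nil, hb, by simp, by simp⟩
      | cons c t =>
        rw [List.Chain, List.chain_cons] at hc
        have hb' : (c :: t).getLast (List.cons_ne_nil _ _) = b := by
          rw [← hb, List.getLast_cons (List.cons_ne_nil _ _)]
        have hlen : t.length ≤ n := by
          have := hn; simp only [List.length_cons] at this; omega
        obtain ⟨t', h1, h2, h3, h4⟩ := ih t hlen c b hc.2 hb'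
        have hat' : a ∉ c :: t' := by
          intro hmem
          rcases List.mem_cons.mp hmem with rfl | hmem
          · exact h (List.mem_cons_self)
          · exact h (List.mem_cons_of_mem _ (h4 a hmem))
        refine ⟨c :: t', List.chain_cons.mpr ⟨hc.1, h1⟩, ?_, ?_, ?_⟩
        · rwa [List.getLast_cons (List.cons_ne_nil _ _)]
        · exact List.nodup_cons.mpr ⟨hat', h3⟩
        · intro x hx
          rcases List.mem_cons.mp hx with rfl | hx
          · exact List.mem_cons_self
          · exact List.mem_cons_of_mem _ (h4 x hx)

lemma chain_dedup (l : List P) (a b : P) (hc : List.Chain r a l)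
    (hb : (a :: l).getLast (List.cons_ne_nil _ _) = b) :
    ∃ l', List.Chain r a l' ∧ (a :: l').getLast (List.cons_ne_nil _ _) = b ∧
      (a :: l').Nodup ∧ ∀ x ∈ l', x ∈ l :=
  chain_dedup_aux l.length l le_rfl a b hc hb

end Prune


theorem witness_chain_exists (M : Model) (w : M.W) (L : List Prg) (ψ : Fml)
    (hL : L ≠ []) (h : M.sat w (dias L ψ)) :
    ∃ (n : ℕ) (ws : ℕ → M.W) (ψs : ℕ → Fml),
      IsWitnessChain M (dias L ψ) ψ w n ws ψs := by
  obtain ⟨α, L', rfl⟩ := List.exists_cons_of_ne_nil hL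
  have hstart_ne : dias (α :: L') ψ ≠ ψ := dias_ne ψ α L'
  obtain ⟨v, hrtg⟩ := reachL M ψ (α :: L') w h
  set a : M.W × Fml := (w, dias (α :: L') ψ) with ha
  obtain ⟨l, hch, hlast⟩ := List.exists_isChain_cons_of_relationReflTransGen hrtg
  have hinva : WInv M ψ a := ⟨h, pre_dias ψ _⟩
  have hinvl : ∀ x ∈ l, WInv M ψ x :=
    fun x hx => List.IsChain.induction _ _ hch (fun x y hxy _ => hxy.2) (fun _ => hinva) x
      (List.mem_cons_of_mem _ hx)
  have hchS : List.Chain (WStep M) a l := List.IsChain.imp (fun _ _ hxy => hxy.1) hch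
  have hlne : l ≠ [] := by
    intro hnil; subst hnil
    simp only [List.getLast_singleton] at hlast
    exact hstart_ne (congrArg Prod.snd hlast)
  have hex : ∃ x ∈ l, x.2 = ψ := by
    refine ⟨(v, ψ), ?_, rfl⟩
    rw [← hlast, List.getLast_cons hlne]
    exact List.getLast_mem hlne
  have hpa : ¬ (a.2 = ψ) := hstart_ne
  obtain ⟨l₁, h1ne, h1ch, h1p, h1drop, h1mem⟩ :=
    chain_truncate (fun x => x.2 = ψ) l a hchS hex hpa
  set b := (a :: l₁).getLast (List.cons_ne_nil _ _) with hbdef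
  have hbψ : b.2 = ψ := h1p
  obtain ⟨l', h2ch, h2last, h2nd, h2mem⟩ := chain_dedup l₁ a b h1ch rfl
  have habne : a ≠ b := fun e => hpa (by rw [e]; exact hbψ)
  have hl'ne : l' ≠ [] := by
    intro hnil; subst hnil
    simp only [List.getLast_singleton] at h2last
    exact habne h2last
  have honly : ∀ x ∈ a :: l', x.2 = ψ → x = b := by
    intro x hx hxψ
    rcases List.mem_cons.mp hx with rfl | hx
    · exact absurd hxψ hpa
    · have hx1 : x ∈ a :: l₁ := List.mem_cons_of_mem _ (h2mem x hx)
      rw [← List.dropLast_concat_getLast (l := a :: l₁) (List.cons_ne_nil _ _)] at hx1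
      rcases List.mem_append.mp hx1 with hmem | hmem
      · exact absurd hxψ (h1drop x hmem)
      · simpa using hmem
  have hinvall : ∀ x ∈ a :: l', WInv M ψ x := by
    intro x hx
    rcases List.mem_cons.mp hx with rfl | hx
    · exact hinva
    · exact hinvl x (h1mem x (h2mem x hx))
  set n := l'.length with hn
  set f : ℕ → M.W × Fml := fun i => (a :: l').getD i a with hfdef
  have hlen : (a :: l').length = n + 1 := by simp [hn]
  have hfd : ∀ (i : ℕ) (hi : i < (a :: l').length), f i = (a :: l')[i] := by
    intro i hi
    simp [hfdef, List.getD_eq_getElem?_getD, List.getElem?_eq_getElem hi]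
  have hmemf : ∀ i, i ≤ n → f i ∈ a :: l' := by
    intro i hi
    rw [hfd i (by omega)]
    exact List.getElem_mem _
  have hinj : ∀ i ≤ n, ∀ j ≤ n, f i = f j → i = j := by
    intro i hi j hj he
    rw [hfd i (by omega), hfd j (by omega)] at he
    exact (List.Nodup.getElem_inj_iff h2nd).mp he
  have hf0 : f 0 = a := by rw [hfd 0 (by omega)]; rfl
  have hfn : f n = b := by
    rw [hfd n (by omega), ← h2last, List.getLast_eq_getElem]
    congr 1
  have hch' : List.Chain' (WStep M) (a :: l') := h2ch
  have hstep : ∀ i, i < n → WStep M (f i) (f (i + 1)) := by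
    intro i hi
    have hs := List.isChain_iff_getElem.mp hch' i (by simp; omega)
    rw [hfd i (by omega), hfd (i + 1) (by omega)]
    simpa [List.get_eq_getElem] using hs
  refine ⟨n, fun i => (f i).1, fun i => (f i).2, List.length_pos_iff.mpr hl'ne, ?_, ?_, ?_, ?_, ?_, ?_, ?_⟩
  · intro i hi
    have := hinvall (f i) (hmemf i hi)
    exact ⟨this.2, this.1⟩
  · show (f 0).1 = w
    rw [hf0]
  · show (f 0).2 = dias (α :: L') ψ
    rw [hf0]
  · show (f n).2 = ψ
    rw [hfn]; exact hbψ
  · intro i hi he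
    have hib : f i = b := honly (f i) (hmemf i (le_of_lt hi)) he
    have : i = n := hinj i (le_of_lt hi) n le_rfl (by rw [hib, hfn])
    omega
  · intro i hi j hj hij he
    exact hij (hinj i hi j hj (Prod.ext (congrArg Prod.fst he) (congrArg Prod.snd he)))
  · intro i hi
    have st := hstep i hi
    constructor
    · intro a' χ hiψ
      have hiψ' : (f i).2 = Fml.dia (Prg.atom a') χ := hiψ
      rcases st with ⟨a₀, χ₀, h1, h2, h3⟩ | ⟨hno, _, _⟩
      · rw [hiψ'] at h1
        simp only [Fml.dia.injEq, Prg.atom.injEq] at h1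
        obtain ⟨rfl, rfl⟩ := h1
        exact ⟨h2, h3⟩
      · exact absurd hiψ' (hno a' χ)
    · intro hno
      have hno' : ∀ (a₁ : ℕ) (χ : Fml), (f i).2 ≠ Fml.dia (Prg.atom a₁) χ := hno
      rcases st with ⟨a₀, χ₀, h1, _, _⟩ | ⟨_, hred, heq⟩
      · exact absurd h1 (hno' a₀ χ₀)
      · exact ⟨hred, heq⟩
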